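/- In the locally bounded semimartingale market, with ℙ_F defined by dℙ_F/dℙ = e^{αF}/𝔼[e^{αF}], the dual value process I^F_t := essinf_{Q ∈ M_f} [I_t(Q|ℙ) − α𝔼^Q[F|F_t]] satisfies I^F_t = essinf_{Q ∈ M_f} I_t(Q|ℙ_F) − log 𝔼[e^{αF}|F_t] for all 0 ≤ t ≤ T; in particular the dual minimiser Q^F minimises the conditional relative entropy process I_t(Q|ℙ_F) over Q ∈ M_f. -/

import Mathlib

open MeasureTheory ProbabilityTheory Filter Real
open scoped ENNReal Topology

noncomputable section

/-- `X` is a local martingale: there is a localising sequence of stopping times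
increasing to `+∞` such that each stopped process is a martingale. -/
def IsLocalMartingale {Ω : Type*} {mΩ : MeasurableSpace Ω} (ℱ : Filtration ℝ mΩ)
    (Q : Measure Ω) (X : ℝ → Ω → ℝ) : Prop :=
  ∃ τ : ℕ → Ω → ℝ, (∀ n, IsStoppingTime ℱ (fun ω => ((τ n ω : ℝ) : WithTop ℝ))) ∧ (∀ ω, Monotone fun n => τ n ω) ∧
    (∀ᵐ ω ∂Q, Tendsto (fun n => τ n ω) atTop atTop) ∧
    ∀ n, Martingale (fun t ω => X (min t (τ n ω)) ω) ℱ Q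

/-- The density process `Z^{Q,μ}_t = 𝔼^μ[dQ/dμ | F_t]` of `Q` with respect to `μ`. -/
def densProc {Ω : Type*} {mΩ : MeasurableSpace Ω} (ℱ : Filtration ℝ mΩ)
    (μ Q : Measure Ω) (t : ℝ) : Ω → ℝ :=
  MeasureTheory.condExp (ℱ t) μ (fun ω => (Q.rnDeriv μ ω).toReal)

/-- The conditional relative entropy process
`I_t(Q|μ) = 𝔼^Q[log (Z^{Q,μ}_T / Z^{Q,μ}_t) | F_t]` between `Q` and `μ`. -/
def condRelEntropy {Ω : Type*} {mΩ : MeasurableSpace Ω} (ℱ : Filtration ℝ mΩ)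
    (μ Q : Measure Ω) (T t : ℝ) : Ω → ℝ :=
  MeasureTheory.condExp (ℱ t) Q
    (fun ω => Real.log (densProc ℱ μ Q T ω / densProc ℱ μ Q t ω))

/-- The set `M_f` of equivalent local martingale measures for `S` with finite
relative entropy with respect to `P`. -/
def Mf {Ω : Type*} {mΩ : MeasurableSpace Ω} (ℱ : Filtration ℝ mΩ) (P : Measure Ω)
    {d : ℕ} (S : ℝ → Ω → Fin d → ℝ) : Set (Measure Ω) :=
  {Q | IsProbabilityMeasure Q ∧ Q ≪ P ∧ P ≪ Q ∧
    (∀ i, IsLocalMartingale ℱ Q fun t ω => S t ω i) ∧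
    Integrable (fun ω => Real.log ((Q.rnDeriv P ω).toReal)) Q}

/-- `Y` is (a version of) the essential supremum under `P` of the family `X i`. -/
def IsEssSupFam {Ω : Type*} {_ : MeasurableSpace Ω} {ι : Sort*} (P : Measure Ω)
    (X : ι → Ω → ℝ) (Y : Ω → ℝ) : Prop :=
  (∀ i, X i ≤ᵐ[P] Y) ∧ ∀ Z : Ω → ℝ, (∀ i, X i ≤ᵐ[P] Z) → Y ≤ᵐ[P] Z

/-- `Y` is (a version of) the essential infimum under `P` of the family `X i`. -/
def IsEssInfFam {Ω : Type*} {_ : MeasurableSpace Ω} {ι : Sort*} (P : Measure Ω)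
    (X : ι → Ω → ℝ) (Y : Ω → ℝ) : Prop :=
  (∀ i, Y ≤ᵐ[P] X i) ∧ ∀ Z : Ω → ℝ, (∀ i, Z ≤ᵐ[P] X i) → Z ≤ᵐ[P] Y

namespace DualAux

/-- Fenchel-Young type inequality. -/
lemma fenchel {a b : ℝ} (ha : 0 ≤ a) : a * b ≤ a * max (Real.log a) 0 + Real.exp b := by
  rcases eq_or_lt_of_le ha with h | h
  · rw [← h]; simpa using (Real.exp_pos b).le
  · have h1 := Real.add_one_le_exp (b - Real.log a)
    have h2 : Real.exp (b - Real.log a) = Real.exp b / a := by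
      rw [Real.exp_sub, Real.exp_log h]
    rw [h2] at h1
    have h3 : (b - Real.log a + 1) * a ≤ Real.exp b := by
      rw [← le_div_iff₀ h]; linarith
    have h4 : a * Real.log a ≤ a * max (Real.log a) 0 :=
      mul_le_mul_of_nonneg_left (le_max_left _ _) ha
    nlinarith

lemma line_le_xlogx {q : ℝ} (hq : 1 < q) {x : ℝ} (hx : 0 ≤ x) :
    (Real.log q + 1) * x - q ≤ x * max (Real.log x) 0 := by
  have hq0 : (0:ℝ) < q := lt_trans one_pos hq
  rcases le_or_gt x 1 with h | h
  · have hlq : 0 ≤ Real.log q := Real.log_nonneg hq.le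
    have h1 : (Real.log q + 1) * x ≤ Real.log q + 1 := by nlinarith
    have h2 : Real.log q + 1 ≤ q := by
      have := Real.log_le_sub_one_of_pos hq0; linarith
    have h3 : 0 ≤ x * max (Real.log x) 0 := mul_nonneg hx (le_max_right _ _)
    linarith
  · have hx0 : (0:ℝ) < x := lt_trans one_pos h
    rw [max_eq_left (Real.log_nonneg h.le)]
    have hqx : (0:ℝ) < q / x := by positivity
    have h1 : Real.log (q / x) ≤ q / x - 1 := Real.log_le_sub_one_of_pos hqx
    rw [Real.log_div hq0.ne' hx0.ne'] at h1
    have h2 : x * (q / x) = q := by field_simp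
    nlinarith

lemma xlogx_le_of_forall_line {x y : ℝ} (hx : 0 ≤ x) (hy : 0 ≤ y)
    (h : ∀ q : ℚ, 1 < (q : ℝ) → (Real.log q + 1) * x - q ≤ y) :
    x * max (Real.log x) 0 ≤ y := by
  rcases le_or_gt x 1 with hx1 | hx1
  · have hlog : Real.log x ≤ 0 := Real.log_nonpos hx hx1
    rw [max_eq_right hlog, mul_zero]; exact hy
  · rw [max_eq_left (Real.log_nonneg hx1.le)]
    by_contra hcon
    push_neg at hcon
    have hx0 : (0:ℝ) < x := lt_trans one_pos hx1
    set δ := x * Real.log x - y with hδ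
    have hδpos : 0 < δ := by linarith
    have hcont : ContinuousAt (fun q : ℝ => (Real.log q + 1) * x - q) x := by
      exact (((Real.continuousAt_log hx0.ne').add continuousAt_const).mul
        continuousAt_const).sub continuousAt_id
    obtain ⟨ε, hε, hball⟩ := Metric.continuousAt_iff.mp hcont δ hδpos
    obtain ⟨q, hq1, hq2⟩ := exists_rat_btwn (show max 1 (x - ε) < x from
      max_lt hx1 (by linarith))
    have hq1' : 1 < (q : ℝ) := lt_of_le_of_lt (le_max_left _ _) hq1
    have hdist : dist (q : ℝ) x < ε := by
      rw [Real.dist_eq, abs_of_nonpos (by linarith)]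
      have : x - ε < (q : ℝ) := lt_of_le_of_lt (le_max_right _ _) hq1
      linarith
    have hb := hball hdist
    rw [Real.dist_eq] at hb
    have habs := abs_lt.mp hb
    have hGq := h q hq1'
    have hval : (Real.log x + 1) * x - x = x * Real.log x := by ring
    linarith [habs.1, habs.2]

lemma line_le_rpow {θ : ℝ} (hθ : 0 < θ) {q x : ℝ} (hq : 0 < q) (hx : 0 < x) :
    q ^ (-θ) - θ * q ^ (-θ - 1) * (x - q) ≤ x ^ (-θ) := by
  have hu : (0:ℝ) < x / q := by positivity
  have h1 : (x / q) ^ (-θ) = Real.exp (-θ * Real.log (x / q)) := by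
    rw [Real.rpow_def_of_pos hu, mul_comm]
  have h2 := Real.add_one_le_exp (-θ * Real.log (x / q))
  have h3 : Real.log (x / q) ≤ x / q - 1 := Real.log_le_sub_one_of_pos hu
  have h4 : 1 + θ - θ * (x / q) ≤ (x / q) ^ (-θ) := by
    rw [h1]
    nlinarith [mul_le_mul_of_nonneg_left h3 hθ.le]
  have hs : (0:ℝ) < q ^ (-θ) := Real.rpow_pos_of_pos hq _
  have hdiv : (x / q) ^ (-θ) = x ^ (-θ) / q ^ (-θ) := Real.div_rpow hx.le hq.le _
  have hA : q ^ (-θ - 1) * q = q ^ (-θ) := by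
    rw [← Real.rpow_add_one hq.ne' (-θ - 1)]; congr 1; ring
  have hdiv' : q ^ (-θ) * ((x / q) ^ (-θ)) = x ^ (-θ) := by
    rw [hdiv]; field_simp
  have hrx : q ^ (-θ - 1) * x = q ^ (-θ) * (x / q) := by
    rw [← hA]; field_simp
  have h5 : q ^ (-θ) * (1 + θ - θ * (x / q)) ≤ q ^ (-θ) * ((x / q) ^ (-θ)) :=
    mul_le_mul_of_nonneg_left h4 hs.le
  nlinarith [h5, hdiv', hA, hrx]

lemma rpow_le_of_forall_line {θ x y : ℝ} (hθ : 0 < θ) (hx : 0 < x)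
    (h : ∀ q : ℚ, 0 < (q : ℝ) →
      (q : ℝ) ^ (-θ) - θ * (q : ℝ) ^ (-θ - 1) * (x - q) ≤ y) :
    x ^ (-θ) ≤ y := by
  by_contra hcon
  push_neg at hcon
  set δ := x ^ (-θ) - y with hδ
  have hδpos : 0 < δ := by linarith
  have hcont : ContinuousAt (fun q : ℝ => q ^ (-θ) - θ * q ^ (-θ - 1) * (x - q)) x := by
    have h1 : ContinuousAt (fun q : ℝ => q ^ (-θ)) x :=
      Real.continuousAt_rpow_const x (-θ) (Or.inl hx.ne')
    have h2 : ContinuousAt (fun q : ℝ => q ^ (-θ - 1)) x :=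
      Real.continuousAt_rpow_const x (-θ - 1) (Or.inl hx.ne')
    exact h1.sub (((continuousAt_const.mul h2)).mul
      (continuousAt_const.sub continuousAt_id))
  obtain ⟨ε, hε, hball⟩ := Metric.continuousAt_iff.mp hcont δ hδpos
  obtain ⟨q, hq1, hq2⟩ := exists_rat_btwn (show max (x / 2) (x - ε) < x from
    max_lt (by linarith) (by linarith))
  have hq0 : 0 < (q : ℝ) := lt_of_lt_of_le (by linarith : (0:ℝ) < x / 2)
    (le_of_lt (lt_of_le_of_lt (le_max_left _ _) hq1))
  have hdist : dist (q : ℝ) x < ε := by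
    rw [Real.dist_eq, abs_of_nonpos (by linarith)]
    have : x - ε < (q : ℝ) := lt_of_le_of_lt (le_max_right _ _) hq1
    linarith
  have hb := hball hdist
  rw [Real.dist_eq] at hb
  have habs := abs_lt.mp hb
  have hGq := h q hq0
  have hval : x ^ (-θ) - θ * x ^ (-θ - 1) * (x - x) = x ^ (-θ) := by ring
  linarith [habs.1, habs.2]

lemma neglog_mul_le_one {x : ℝ} (hx : 0 ≤ x) : max (-Real.log x) 0 * x ≤ 1 := by
  rcases eq_or_lt_of_le hx with h | h
  · rw [← h]; simp
  · rcases le_or_gt 1 x with h1 | h1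
    · rw [max_eq_right (neg_nonpos.mpr (Real.log_nonneg h1))]; simp
    · rw [max_eq_left (neg_nonneg.mpr (Real.log_nonpos h.le h1.le))]
      have h2 : Real.log x⁻¹ ≤ x⁻¹ - 1 := Real.log_le_sub_one_of_pos (by positivity)
      rw [Real.log_inv] at h2
      have h3 : x * x⁻¹ = 1 := mul_inv_cancel₀ h.ne'
      nlinarith

lemma exp_max_log_le {y : ℝ} (hy : 0 < y) : Real.exp (max (Real.log y) 0) ≤ y + 1 := by
  rcases le_or_gt (Real.log y) 0 with h | h
  · rw [max_eq_right h]; simp; linarith [hy.le]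
  · rw [max_eq_left h.le, Real.exp_log hy]; linarith



variable {Ω : Type*} {m mΩ : MeasurableSpace Ω} {μ : Measure Ω}

lemma condexp_affine (hm : m ≤ mΩ) [IsFiniteMeasure μ] (a b : ℝ) {g : Ω → ℝ}
    (hg : Integrable g μ) :
    μ[(fun ω => a * g ω + b)|m] =ᵐ[μ] fun ω => a * (μ[g|m]) ω + b := by
  have h1 : (fun ω => a * g ω + b) = (a • g) + (fun _ => b) := by
    funext ω; simp [smul_eq_mul]
  have h2 := condExp_add (μ := μ) (m := m) (hg.smul a) (integrable_const b)
  have h3 := condExp_smul (μ := μ) (m := m) a g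
  have h4 := condExp_const (μ := μ) hm b
  rw [h1]
  filter_upwards [h2, h3] with ω hω2 hω3
  rw [hω2]
  simp only [Pi.add_apply, hω3, Pi.smul_apply, smul_eq_mul, h4]

lemma condexp_line_le (hm : m ≤ mΩ) [IsFiniteMeasure μ] {g φg : Ω → ℝ}
    (hg : Integrable g μ) (hφ : Integrable φg μ) (a b : ℝ)
    (hline : ∀ᵐ ω ∂μ, a * g ω + b ≤ φg ω) :
    ∀ᵐ ω ∂μ, a * (μ[g|m]) ω + b ≤ (μ[φg|m]) ω := by
  have hint : Integrable (fun ω => a * g ω + b) μ := by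
    have := (hg.const_mul a).add (integrable_const b)
    simpa using this
  have h1 := condExp_mono (μ := μ) (m := m) hint hφ hline
  have h2 := condexp_affine hm a b hg
  filter_upwards [h1, h2] with ω h1 h2
  rw [← h2]; exact h1

lemma condexp_pos (hm : m ≤ mΩ) [IsProbabilityMeasure μ] {g : Ω → ℝ}
    (hg : Integrable g μ) (hg0 : ∀ᵐ ω ∂μ, 0 < g ω) :
    ∀ᵐ ω ∂μ, 0 < (μ[g|m]) ω := by
  set A := {ω | (μ[g|m]) ω ≤ 0} with hA
  have hAm : MeasurableSet[m] A :=
    measurableSet_le (stronglyMeasurable_condExp.measurable) measurable_const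
  have hAm' : MeasurableSet A := hm _ hAm
  have hintC : ∫ ω in A, (μ[g|m]) ω ∂μ ≤ 0 :=
    integral_nonpos_of_ae ((ae_restrict_iff' hAm').mpr
      (Eventually.of_forall fun ω hω => hω))
  have hintg : ∫ ω in A, g ω ∂μ ≤ 0 := by
    rw [← setIntegral_condExp hm hg hAm]; exact hintC
  have hg0' : 0 ≤ᵐ[μ.restrict A] g := ae_restrict_of_ae (hg0.mono fun ω h => h.le)
  have hinteq : ∫ ω in A, g ω ∂μ = 0 :=
    le_antisymm hintg (integral_nonneg_of_ae hg0')
  have hzero : g =ᵐ[μ.restrict A] 0 :=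
    (integral_eq_zero_iff_of_nonneg_ae hg0' hg.integrableOn).mp hinteq
  have hfalse : ∀ᵐ ω ∂μ.restrict A, False := by
    filter_upwards [hzero, ae_restrict_of_ae hg0] with ω h1 h2
    rw [h1] at h2; exact lt_irrefl 0 h2
  have hA0 : μ A = 0 := by
    have := hfalse
    rw [ae_iff] at this
    simpa [Measure.restrict_apply MeasurableSet.univ, Set.univ_inter] using this
  have : ∀ᵐ ω ∂μ, ω ∉ A := by
    rw [ae_iff]; simpa using hA0
  filter_upwards [this] with ω hω
  simpa [hA, not_le] using hω

lemma jensen_xlogx (hm : m ≤ mΩ) [IsProbabilityMeasure μ] {g : Ω → ℝ}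
    (hg : Integrable g μ) (hg0 : 0 ≤ᵐ[μ] g)
    (hφ : Integrable (fun ω => g ω * max (Real.log (g ω)) 0) μ) :
    ∀ᵐ ω ∂μ, (μ[g|m]) ω * max (Real.log ((μ[g|m]) ω)) 0
      ≤ (μ[(fun ω => g ω * max (Real.log (g ω)) 0)|m]) ω := by
  have hCnn := condExp_nonneg (μ := μ) (m := m) hg0
  have hφnn : 0 ≤ᵐ[μ] fun ω => g ω * max (Real.log (g ω)) 0 :=
    hg0.mono fun ω h => mul_nonneg h (le_max_right _ _)
  have hφC := condExp_nonneg (μ := μ) (m := m) hφnn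
  have hq : ∀ q : ℚ, ∀ᵐ ω ∂μ, 1 < (q : ℝ) →
      (Real.log q + 1) * (μ[g|m]) ω + (-(q : ℝ))
        ≤ (μ[(fun ω => g ω * max (Real.log (g ω)) 0)|m]) ω := by
    intro q
    by_cases h1 : 1 < (q : ℝ)
    · have := condexp_line_le hm hg hφ (Real.log q + 1) (-(q : ℝ))
        (hg0.mono fun ω h0 => by
          have h0' : (0:ℝ) ≤ g ω := h0
          have := line_le_xlogx h1 h0'; linarith)
      exact this.mono fun ω h _ => h
    · exact Eventually.of_forall fun ω h => absurd h h1
  have hall := (ae_all_iff).mpr hq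
  filter_upwards [hall, hCnn, hφC] with ω hω h1 h2
  exact xlogx_le_of_forall_line h1 h2 fun q hq1 => by
    have := hω q hq1; linarith

lemma jensen_rpow (hm : m ≤ mΩ) [IsProbabilityMeasure μ] {θ : ℝ} (hθ : 0 < θ) {g : Ω → ℝ}
    (hg : Integrable g μ) (hg0 : ∀ᵐ ω ∂μ, 0 < g ω)
    (hφ : Integrable (fun ω => g ω ^ (-θ)) μ) :
    ∀ᵐ ω ∂μ, (μ[g|m]) ω ^ (-θ) ≤ (μ[(fun ω => g ω ^ (-θ))|m]) ω := by
  have hCpos := condexp_pos hm hg hg0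
  have hq : ∀ q : ℚ, ∀ᵐ ω ∂μ, 0 < (q : ℝ) →
      (-(θ * (q : ℝ) ^ (-θ - 1))) * (μ[g|m]) ω
        + ((q : ℝ) ^ (-θ) + θ * (q : ℝ) ^ (-θ - 1) * q)
        ≤ (μ[(fun ω => g ω ^ (-θ))|m]) ω := by
    intro q
    by_cases h1 : 0 < (q : ℝ)
    · have := condexp_line_le hm hg hφ (-(θ * (q : ℝ) ^ (-θ - 1)))
        ((q : ℝ) ^ (-θ) + θ * (q : ℝ) ^ (-θ - 1) * q)
        (hg0.mono fun ω h0 => by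
          have := line_le_rpow hθ h1 h0; nlinarith)
      exact this.mono fun ω h _ => h
    · exact Eventually.of_forall fun ω h => absurd h h1
  have hall := (ae_all_iff).mpr hq
  filter_upwards [hall, hCpos] with ω hω h1
  refine rpow_le_of_forall_line hθ h1 fun q hq0 => ?_
  have := hω q hq0; nlinarith


end DualAux
namespace DualAux

variable {Ω : Type*} {m mΩ : MeasurableSpace Ω} {μ : Measure Ω}

lemma tower (hm : m ≤ mΩ) [IsProbabilityMeasure μ] {G ψ : Ω → ℝ}
    (hGint : Integrable G μ) (hGmeas : Measurable G) (hG0 : ∀ ω, 0 ≤ G ω)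
    (hψm : StronglyMeasurable[m] ψ) (hψ0 : ∀ ω, 0 ≤ ψ ω) :
    ∫⁻ ω, ENNReal.ofReal (ψ ω * G ω) ∂μ
      = ∫⁻ ω, ENNReal.ofReal (ψ ω * (μ[G|m]) ω) ∂μ := by
  set C : Ω → ℝ := μ[G|m] with hC
  set C' : Ω → ℝ := fun ω => max (C ω) 0 with hC'
  have hCC' : C' =ᵐ[μ] C :=
    (condExp_nonneg (Eventually.of_forall hG0)).mono fun ω h => max_eq_left h
  have hC'meas : Measurable C' :=
    ((stronglyMeasurable_condExp.mono hm).measurable).max measurable_const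
  have hC'int : Integrable C' μ := by
    have := integrable_condExp (μ := μ) (m := m) (f := G) |>.pos_part
    simpa [hC'] using this
  have hC'0 : ∀ ω, 0 ≤ C' ω := fun ω => le_max_right _ _
  have hψmeas : Measurable ψ := (hψm.mono hm).measurable
  have hψn0 : ∀ (n : ℕ) ω, 0 ≤ min (ψ ω) n :=
    fun n ω => le_min (hψ0 ω) (Nat.cast_nonneg n)
  have hψnbd : ∀ (n : ℕ), ∀ᵐ ω ∂μ, ‖min (ψ ω) (n : ℝ)‖ ≤ (n : ℝ) :=
    fun n => Eventually.of_forall fun ω => by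
      rw [Real.norm_eq_abs, abs_of_nonneg (hψn0 n ω)]; exact min_le_right _ _
  have hψnsm : ∀ n : ℕ, StronglyMeasurable[m] (fun ω => min (ψ ω) (n : ℝ)) :=
    fun n => (hψm.measurable.min (@measurable_const ℝ Ω _ m _)).stronglyMeasurable
  -- pointwise sup identity
  have key1 : ∀ (H : Ω → ℝ), (∀ ω, 0 ≤ H ω) → ∀ ω,
      ENNReal.ofReal (ψ ω * H ω) = ⨆ n : ℕ, ENNReal.ofReal (min (ψ ω) n * H ω) := by
    intro H hH ω
    refine le_antisymm ?_ (iSup_le fun n => ENNReal.ofReal_le_ofReal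
      (mul_le_mul_of_nonneg_right (min_le_left _ _) (hH ω)))
    refine le_iSup_of_le ⌈ψ ω⌉₊ ?_
    rw [min_eq_left (Nat.le_ceil _)]
  have keymono : ∀ (H : Ω → ℝ), (∀ ω, 0 ≤ H ω) →
      Monotone (fun (n : ℕ) (ω : Ω) => ENNReal.ofReal (min (ψ ω) n * H ω)) := by
    intro H hH n k hnk ω
    exact ENNReal.ofReal_le_ofReal (mul_le_mul_of_nonneg_right
      (min_le_min le_rfl (Nat.cast_le.2 hnk)) (hH ω))
  -- per-n integral equality
  have hint_n : ∀ n : ℕ, Integrable (fun ω => min (ψ ω) n * G ω) μ :=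
    fun n => hGint.bdd_mul (((hψnsm n).mono hm).aestronglyMeasurable) (hψnbd n)
  have hint_n' : ∀ n : ℕ, Integrable (fun ω => min (ψ ω) n * C' ω) μ :=
    fun n => hC'int.bdd_mul (((hψnsm n).mono hm).aestronglyMeasurable) (hψnbd n)
  have key3 : ∀ n : ℕ, ∫⁻ ω, ENNReal.ofReal (min (ψ ω) n * G ω) ∂μ
      = ∫⁻ ω, ENNReal.ofReal (min (ψ ω) n * C' ω) ∂μ := by
    intro n
    have hmul := condExp_stronglyMeasurable_mul_of_bound hm
      (f := fun ω => min (ψ ω) (n : ℝ)) (g := G) (hψnsm n) hGint n (hψnbd n)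
    have heq : ∫ ω, min (ψ ω) n * G ω ∂μ = ∫ ω, min (ψ ω) n * C' ω ∂μ := by
      calc ∫ ω, min (ψ ω) n * G ω ∂μ
          = ∫ ω, (μ[(fun ω => min (ψ ω) n) * G|m]) ω ∂μ := by
            rw [integral_condExp hm]; simp only [Pi.mul_apply]
        _ = ∫ ω, min (ψ ω) n * C ω ∂μ := by
            refine integral_congr_ae (hmul.mono fun ω h => ?_)
            rw [h]; simp only [Pi.mul_apply]; rfl
        _ = ∫ ω, min (ψ ω) n * C' ω ∂μ :=
            integral_congr_ae (hCC'.mono fun ω h => by dsimp only; rw [h])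
    rw [← ofReal_integral_eq_lintegral_ofReal (hint_n n)
        (Eventually.of_forall fun ω => mul_nonneg (hψn0 n ω) (hG0 ω)),
      ← ofReal_integral_eq_lintegral_ofReal (hint_n' n)
        (Eventually.of_forall fun ω => mul_nonneg (hψn0 n ω) (hC'0 ω)),
      heq]
  calc ∫⁻ ω, ENNReal.ofReal (ψ ω * G ω) ∂μ
      = ∫⁻ ω, ⨆ n : ℕ, ENNReal.ofReal (min (ψ ω) n * G ω) ∂μ :=
        lintegral_congr (key1 G hG0)
    _ = ⨆ n : ℕ, ∫⁻ ω, ENNReal.ofReal (min (ψ ω) n * G ω) ∂μ :=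
        lintegral_iSup (fun n => ((hψmeas.min measurable_const).mul hGmeas).ennreal_ofReal)
          (fun n k hnk ω => keymono G hG0 hnk ω)
    _ = ⨆ n : ℕ, ∫⁻ ω, ENNReal.ofReal (min (ψ ω) n * C' ω) ∂μ := by
        exact iSup_congr key3
    _ = ∫⁻ ω, ⨆ n : ℕ, ENNReal.ofReal (min (ψ ω) n * C' ω) ∂μ :=
        (lintegral_iSup (fun n => ((hψmeas.min measurable_const).mul hC'meas).ennreal_ofReal)
          (fun n k hnk ω => keymono C' hC'0 hnk ω)).symm
    _ = ∫⁻ ω, ENNReal.ofReal (ψ ω * C' ω) ∂μ :=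
        (lintegral_congr (key1 C' hC'0)).symm
    _ = ∫⁻ ω, ENNReal.ofReal (ψ ω * C ω) ∂μ :=
        lintegral_congr_ae (hCC'.mono fun ω h => by dsimp only; rw [h])

/-- Integrability transfer across the tower identity. -/
lemma tower_integrable (hm : m ≤ mΩ) [IsProbabilityMeasure μ] {G ψ : Ω → ℝ}
    (hGint : Integrable G μ) (hGmeas : Measurable G) (hG0 : ∀ ω, 0 ≤ G ω)
    (hψm : StronglyMeasurable[m] ψ) (hψ0 : ∀ ω, 0 ≤ ψ ω)
    (hint : Integrable (fun ω => ψ ω * (μ[G|m]) ω) μ) :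
    Integrable (fun ω => ψ ω * G ω) μ := by
  have hψmeas : Measurable ψ := (hψm.mono hm).measurable
  refine ⟨((hψmeas.mul hGmeas)).aestronglyMeasurable, ?_⟩
  rw [hasFiniteIntegral_iff_ofReal
    (Eventually.of_forall fun ω => mul_nonneg (hψ0 ω) (hG0 ω))]
  rw [tower hm hGint hGmeas hG0 hψm hψ0]
  calc ∫⁻ ω, ENNReal.ofReal (ψ ω * (μ[G|m]) ω) ∂μ
      ≤ ∫⁻ ω, (‖ψ ω * (μ[G|m]) ω‖₊ : ℝ≥0∞) ∂μ :=
        lintegral_mono fun ω => Real.ofReal_le_enorm _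
    _ < ∞ := hint.2

end DualAux
namespace DualAux

lemma main_identity {Ω : Type*} {mΩ : MeasurableSpace Ω} (P : Measure Ω) [IsProbabilityMeasure P]
    (T : ℝ) (ℱ : Filtration ℝ mΩ) (hFT : ℱ T = mΩ)
    (α : ℝ) (hα : 0 < α) (F : Ω → ℝ) (hFmeas : Measurable F)
    (hFexp : ∃ ε > 0, Integrable (fun ω => Real.exp ((α + ε) * F ω)) P ∧
      Integrable (fun ω => Real.exp (-ε * F ω)) P)
    (PF : Measure Ω)
    (hPF : PF = P.withDensity (fun ω =>
      ENNReal.ofReal (Real.exp (α * F ω) / ∫ ω', Real.exp (α * F ω') ∂P)))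
    (Q : Measure Ω) (hQprob : IsProbabilityMeasure Q) (hQP : Q ≪ P) (hPQ : P ≪ Q)
    (hllr : Integrable (fun ω => Real.log ((Q.rnDeriv P ω).toReal)) Q) (t : ℝ) :
    condRelEntropy ℱ PF Q T t =ᵐ[P] fun ω =>
      (condRelEntropy ℱ P Q T t ω - α * (MeasureTheory.condExp (ℱ t) Q F ω))
        + Real.log (MeasureTheory.condExp (ℱ t) P (fun ω' => Real.exp (α * F ω')) ω) := by
  obtain ⟨ε, hε, hexp1, hexp2⟩ := hFexp
  have hm : ℱ t ≤ mΩ := ℱ.le t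
  -- integrability of exp (α F)
  have hexpInt : Integrable (fun ω => Real.exp (α * F ω)) P := by
    refine Integrable.mono' (hexp1.add hexp2)
      ((hFmeas.const_mul α).exp).aestronglyMeasurable
      (Eventually.of_forall fun ω => ?_)
    rw [Real.norm_eq_abs, abs_of_nonneg (Real.exp_nonneg _)]
    simp only [Pi.add_apply]
    rcases le_or_gt 0 (F ω) with h | h
    · have h1 : α * F ω ≤ (α + ε) * F ω := by nlinarith
      have := Real.exp_le_exp.mpr h1
      have h2 := Real.exp_nonneg (-ε * F ω)
      linarith
    · have h1 : α * F ω ≤ -ε * F ω := by nlinarith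
      have := Real.exp_le_exp.mpr h1
      have h2 := Real.exp_nonneg ((α + ε) * F ω)
      linarith
  have hPF' : PF = P.tilted (fun ω => α * F ω) := by rw [hPF]; rfl
  set c : ℝ := ∫ ω, Real.exp (α * F ω) ∂P with hc
  have hcpos : 0 < c := integral_exp_pos hexpInt
  haveI hPFprob : IsProbabilityMeasure PF := by
    rw [hPF']; exact isProbabilityMeasure_tilted hexpInt
  have hPPF : P ≪ PF := by rw [hPF']; exact absolutelyContinuous_tilted hexpInt
  have hPFP : PF ≪ P := by rw [hPF']; exact tilted_absolutelyContinuous P _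
  have hQPF : Q ≪ PF := hQP.trans hPPF
  -- basic objects
  set ZT : Ω → ℝ := fun ω => (Q.rnDeriv P ω).toReal with hZT
  have hZTmeas : Measurable ZT := (Measure.measurable_rnDeriv Q P).ennreal_toReal
  have hZTint : Integrable ZT P := Measure.integrable_toReal_rnDeriv
  have hZT0 : ∀ ω, 0 ≤ ZT ω := fun ω => ENNReal.toReal_nonneg
  set Zt : Ω → ℝ := P[ZT|ℱ t] with hZt
  set Et : Ω → ℝ := P[(fun ω => Real.exp (α * F ω))|ℱ t] with hEt
  set Ut : Ω → ℝ := P[(fun ω => Real.exp (-ε * F ω))|ℱ t] with hUt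
  have hZtSM : StronglyMeasurable[ℱ t] Zt := stronglyMeasurable_condExp
  have hEtSM : StronglyMeasurable[ℱ t] Et := stronglyMeasurable_condExp
  have hZtint : Integrable Zt P := integrable_condExp
  have hEtint : Integrable Et P := integrable_condExp
  have hUtint : Integrable Ut P := integrable_condExp
  -- endpoint identities
  have hdensT : densProc ℱ P Q T = ZT := by
    have h0 : densProc ℱ P Q T = MeasureTheory.condExp (ℱ T) P ZT := rfl
    rw [h0, hFT]
    exact condExp_of_stronglyMeasurable le_rfl hZTmeas.stronglyMeasurable hZTint
  have hdensT' : densProc ℱ PF Q T = fun ω => (Q.rnDeriv PF ω).toReal := by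
    have h0 : densProc ℱ PF Q T
        = MeasureTheory.condExp (ℱ T) PF (fun ω => (Q.rnDeriv PF ω).toReal) := rfl
    rw [h0, hFT]
    exact condExp_of_stronglyMeasurable le_rfl
      ((Measure.measurable_rnDeriv Q PF).ennreal_toReal).stronglyMeasurable
      Measure.integrable_toReal_rnDeriv
  have hZT'formula : (fun ω => (Q.rnDeriv PF ω).toReal)
      =ᵐ[P] fun ω => (Real.exp (-(α * F ω)) * c) * ZT ω := by
    rw [hPF']; exact toReal_rnDeriv_tilted_right Q P hexpInt
  -- positivity
  have hZTposQ : ∀ᵐ ω ∂Q, 0 < ZT ω := by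
    filter_upwards [Measure.rnDeriv_pos hQP, hQP.ae_le (Measure.rnDeriv_lt_top Q P)]
      with ω h1 h2
    exact ENNReal.toReal_pos h1.ne' h2.ne
  have hEtpos : ∀ᵐ ω ∂P, 0 < Et ω :=
    condexp_pos hm hexpInt (Eventually.of_forall fun ω => Real.exp_pos _)
  have hZtnn : 0 ≤ᵐ[P] Zt := condExp_nonneg (Eventually.of_forall hZT0)
  have hZtposQ : ∀ᵐ ω ∂Q, 0 < Zt ω := by
    set A := {ω | Zt ω ≤ 0} with hA
    have hAm : MeasurableSet[ℱ t] A :=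
      measurableSet_le hZtSM.measurable measurable_const
    have hQA : Q A = 0 := by
      have h1 : ∫ ω in A, ZT ω ∂P = (Q A).toReal :=
        Measure.setIntegral_toReal_rnDeriv hQP A
      have h2 : ∫ ω in A, Zt ω ∂P = ∫ ω in A, ZT ω ∂P :=
        setIntegral_condExp hm hZTint hAm
      have h3 : ∫ ω in A, Zt ω ∂P ≤ 0 :=
        integral_nonpos_of_ae ((ae_restrict_iff' (hm _ hAm)).mpr
          (Eventually.of_forall fun ω hω => hω))
      have h5 : (Q A).toReal = 0 :=
        le_antisymm (by rw [← h1, ← h2]; exact h3) ENNReal.toReal_nonneg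
      exact ((ENNReal.toReal_eq_zero_iff _).mp h5).resolve_right (measure_ne_top Q A)
    refine ((measure_eq_zero_iff_ae_notMem (μ := Q)).mp hQA).mono fun ω h => ?_
    simpa [hA, not_le] using h
  -- Integrable (ZT * maxlog ZT)
  have hφZT_int : Integrable (fun ω => ZT ω * max (Real.log (ZT ω)) 0) P := by
    have h1 : Integrable (fun ω => ZT ω • Real.log (ZT ω)) P :=
      (integrable_rnDeriv_smul_iff hQP).mpr hllr
    refine Integrable.mono' h1.abs
      ((hZTmeas.mul ((Real.measurable_log.comp hZTmeas).max measurable_const)).aestronglyMeasurable)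
      (Eventually.of_forall fun ω => ?_)
    rw [Real.norm_eq_abs, abs_of_nonneg (mul_nonneg (hZT0 ω) (le_max_right _ _))]
    have h2 : max (Real.log (ZT ω)) 0 ≤ |Real.log (ZT ω)| :=
      max_le (le_abs_self _) (abs_nonneg _)
    calc ZT ω * max (Real.log (ZT ω)) 0 ≤ ZT ω * |Real.log (ZT ω)| :=
          mul_le_mul_of_nonneg_left h2 (hZT0 ω)
      _ = |ZT ω * Real.log (ZT ω)| := by
          rw [abs_mul, abs_of_nonneg (hZT0 ω)]
      _ ≤ |ZT ω • Real.log (ZT ω)| := by rw [smul_eq_mul]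
  have hjen := jensen_xlogx hm hZTint (Eventually.of_forall hZT0) hφZT_int
  have hφZt_int : Integrable (fun ω => Zt ω * max (Real.log (Zt ω)) 0) P := by
    refine Integrable.mono' (integrable_condExp
      (f := fun ω => ZT ω * max (Real.log (ZT ω)) 0) (m := ℱ t)) ?_ ?_
    · exact ((hZtSM.measurable.mono hm le_rfl).mul
        (((Real.measurable_log.comp (hZtSM.measurable.mono hm le_rfl)).max
          measurable_const))).aestronglyMeasurable
    · filter_upwards [hjen, hZtnn] with ω h1 h2
      rw [Real.norm_eq_abs, abs_of_nonneg (mul_nonneg h2 (le_max_right _ _))]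
      exact h1
  -- Integrable (log Zt) under Q
  have hlogZt_int : Integrable (fun ω => Real.log (Zt ω)) Q := by
    have hψpSM : StronglyMeasurable[ℱ t] (fun ω => max (Real.log (Zt ω)) 0) :=
      ((Real.measurable_log.comp hZtSM.measurable).max
        (@measurable_const ℝ Ω _ (ℱ t) _)).stronglyMeasurable
    have hψnSM : StronglyMeasurable[ℱ t] (fun ω => max (-Real.log (Zt ω)) 0) :=
      (((Real.measurable_log.comp hZtSM.measurable).neg).max
        (@measurable_const ℝ Ω _ (ℱ t) _)).stronglyMeasurable
    have hψp_int : Integrable (fun ω => max (Real.log (Zt ω)) 0 * ZT ω) P := by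
      refine tower_integrable hm hZTint hZTmeas hZT0 hψpSM
        (fun ω => le_max_right _ _) ?_
      refine hφZt_int.congr (Eventually.of_forall fun ω => ?_)
      dsimp only; rw [hZt]; ring
    have hψn_int : Integrable (fun ω => max (-Real.log (Zt ω)) 0 * ZT ω) P := by
      refine tower_integrable hm hZTint hZTmeas hZT0 hψnSM
        (fun ω => le_max_right _ _) ?_
      refine Integrable.mono' (integrable_const (1 : ℝ)) ?_ ?_
      · exact (((Real.measurable_log.comp (hZtSM.measurable.mono hm le_rfl)).neg.max
          measurable_const).mul (hZtSM.measurable.mono hm le_rfl)).aestronglyMeasurable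
      · filter_upwards [hZtnn] with ω h1
        rw [Real.norm_eq_abs, abs_of_nonneg (mul_nonneg (le_max_right _ _) h1)]
        simpa using neglog_mul_le_one h1
    have hψpQ : Integrable (fun ω => max (Real.log (Zt ω)) 0) Q := by
      refine (integrable_rnDeriv_smul_iff hQP).mp ?_
      refine hψp_int.congr (Eventually.of_forall fun ω => ?_)
      dsimp only; rw [smul_eq_mul, mul_comm, hZT]
    have hψnQ : Integrable (fun ω => max (-Real.log (Zt ω)) 0) Q := by
      refine (integrable_rnDeriv_smul_iff hQP).mp ?_
      refine hψn_int.congr (Eventually.of_forall fun ω => ?_)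
      dsimp only; rw [smul_eq_mul, mul_comm, hZT]
    refine (hψpQ.sub hψnQ).congr (Eventually.of_forall fun ω => ?_)
    simp only [Pi.sub_apply]
    rcases le_or_gt (Real.log (Zt ω)) 0 with h | h
    · rw [max_eq_right h, max_eq_left (by linarith : (0:ℝ) ≤ -Real.log (Zt ω))]; ring
    · rw [max_eq_left h.le, max_eq_right (by linarith : -Real.log (Zt ω) ≤ 0)]; ring
  -- Integrable F under Q
  have hFintQ : Integrable F Q := by
    refine (integrable_rnDeriv_smul_iff hQP).mp ?_
    refine Integrable.mono' (((hφZT_int.add ((hexp1.add (integrable_const 1)).add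
      hexp2)).const_mul (1 / ε))) ((hZTmeas.smul hFmeas).aestronglyMeasurable)
      (Eventually.of_forall fun ω => ?_)
    rw [smul_eq_mul, Real.norm_eq_abs, abs_mul, abs_of_nonneg (hZT0 ω)]
    simp only [Pi.add_apply]
    have h1 := fenchel (b := ε * |F ω|) (hZT0 ω)
    have h2 : Real.exp (ε * |F ω|) ≤ (Real.exp ((α + ε) * F ω) + 1)
        + Real.exp (-ε * F ω) := by
      rcases le_or_gt 0 (F ω) with h | h
      · rw [abs_of_nonneg h]
        have : ε * F ω ≤ (α + ε) * F ω := by nlinarith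
        have := Real.exp_le_exp.mpr this
        have h3 := Real.exp_nonneg (-ε * F ω)
        linarith
      · rw [abs_of_neg h]
        have : ε * -F ω = -ε * F ω := by ring
        rw [this]
        have h3 := Real.exp_nonneg ((α + ε) * F ω)
        linarith
    have h4 : 0 ≤ ZT ω * max (Real.log (ZT ω)) 0 :=
      mul_nonneg (hZT0 ω) (le_max_right _ _)
    rw [div_mul_eq_mul_div, le_div_iff₀ hε]
    nlinarith
  -- Integrable (log Et) under Q
  have hlogEt_int : Integrable (fun ω => Real.log (Et ω)) Q := by
    have hψpSM : StronglyMeasurable[ℱ t] (fun ω => max (Real.log (Et ω)) 0) :=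
      ((Real.measurable_log.comp hEtSM.measurable).max
        (@measurable_const ℝ Ω _ (ℱ t) _)).stronglyMeasurable
    have hψnSM : StronglyMeasurable[ℱ t] (fun ω => max (-Real.log (Et ω)) 0) :=
      (((Real.measurable_log.comp hEtSM.measurable).neg).max
        (@measurable_const ℝ Ω _ (ℱ t) _)).stronglyMeasurable
    -- positive part
    have hψpQ : Integrable (fun ω => max (Real.log (Et ω)) 0) Q := by
      refine (integrable_rnDeriv_smul_iff hQP).mp ?_
      refine Integrable.mono' ((hφZT_int.add (hEtint.add (integrable_const 1))))
        ((hZTmeas.smul ((Real.measurable_log.comp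
          (hEtSM.measurable.mono hm le_rfl)).max measurable_const)).aestronglyMeasurable)
        ?_
      filter_upwards [hEtpos] with ω h1
      rw [smul_eq_mul, Real.norm_eq_abs,
        abs_of_nonneg (mul_nonneg (hZT0 ω) (le_max_right _ _))]
      simp only [Pi.add_apply]
      have h2 := fenchel (b := max (Real.log (Et ω)) 0) (hZT0 ω)
      have h3 := exp_max_log_le h1
      linarith
    -- negative part, via conditional Jensen for x ^ (-θ)
    set θ : ℝ := ε / α with hθdef
    have hθ : 0 < θ := div_pos hε hα
    have hpoint : ∀ ω, Real.exp (α * F ω) ^ (-θ) = Real.exp (-ε * F ω) := by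
      intro ω
      rw [Real.rpow_def_of_pos (Real.exp_pos _), Real.log_exp]
      congr 1
      field_simp [hθdef]
      rw [hθdef]; field_simp
    have hjr := jensen_rpow hm hθ hexpInt
      (Eventually.of_forall fun ω => Real.exp_pos _)
      (hexp2.congr (Eventually.of_forall fun ω => (hpoint ω).symm))
    have hjr' : ∀ᵐ ω ∂P, Et ω ^ (-θ) ≤ Ut ω := by
      have hcg : (fun ω => Real.exp (α * F ω) ^ (-θ)) = fun ω => Real.exp (-ε * F ω) :=
        funext hpoint
      rw [hcg] at hjr
      exact hjr
    have hψnZt_int : Integrable (fun ω => max (-Real.log (Et ω)) 0 * Zt ω) P := by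
      refine Integrable.mono' (((hφZt_int.add (hUtint.add (integrable_const 1))).const_mul
        (1 / θ)))
        ((((Real.measurable_log.comp (hEtSM.measurable.mono hm le_rfl)).neg.max
          measurable_const).mul (hZtSM.measurable.mono hm le_rfl)).aestronglyMeasurable)
        ?_
      filter_upwards [hEtpos, hZtnn, hjr'] with ω h1 h2 h3
      rw [Real.norm_eq_abs, abs_of_nonneg (mul_nonneg (le_max_right _ _) h2)]
      simp only [Pi.add_apply]
      have h4 := fenchel (b := θ * max (-Real.log (Et ω)) 0) h2
      have h5 : Real.exp (θ * max (-Real.log (Et ω)) 0) ≤ Ut ω + 1 := by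
        have h6 : θ * max (-Real.log (Et ω)) 0 = max (Real.log (Et ω ^ (-θ))) 0 := by
          rw [Real.log_rpow h1]
          rcases le_or_gt (Real.log (Et ω)) 0 with h | h
          · rw [max_eq_left (by linarith : (0:ℝ) ≤ -Real.log (Et ω)),
              max_eq_left (by nlinarith : (0:ℝ) ≤ -θ * Real.log (Et ω))]
            ring
          · rw [max_eq_right (by linarith : -Real.log (Et ω) ≤ 0),
              max_eq_right (by nlinarith : -θ * Real.log (Et ω) ≤ 0)]
            ring
        rw [h6]
        have h7 := exp_max_log_le (Real.rpow_pos_of_pos h1 (-θ))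
        linarith
      have h8 : 0 ≤ Zt ω * max (Real.log (Zt ω)) 0 :=
        mul_nonneg h2 (le_max_right _ _)
      rw [div_mul_eq_mul_div, le_div_iff₀ hθ]
      nlinarith
    have hψnQ : Integrable (fun ω => max (-Real.log (Et ω)) 0) Q := by
      refine (integrable_rnDeriv_smul_iff hQP).mp ?_
      have := tower_integrable hm hZTint hZTmeas hZT0 hψnSM
        (fun ω => le_max_right _ _)
        (hψnZt_int.congr (Eventually.of_forall fun ω => rfl))
      refine this.congr (Eventually.of_forall fun ω => ?_)
      dsimp only; rw [smul_eq_mul, mul_comm, hZT]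
    refine (hψpQ.sub hψnQ).congr (Eventually.of_forall fun ω => ?_)
    simp only [Pi.sub_apply]
    rcases le_or_gt (Real.log (Et ω)) 0 with h | h
    · rw [max_eq_right h, max_eq_left (by linarith : (0:ℝ) ≤ -Real.log (Et ω))]; ring
    · rw [max_eq_left h.le, max_eq_right (by linarith : -Real.log (Et ω) ≤ 0)]; ring
  -- Bayes formula for the density process under PF
  have hψSM : StronglyMeasurable[ℱ t] (fun ω => Zt ω / Et ω) :=
    (hZtSM.measurable.div hEtSM.measurable).stronglyMeasurable
  have hψ'SM : StronglyMeasurable[ℱ t] (fun ω => max (Zt ω / Et ω) 0) :=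
    ((hψSM.measurable).max (@measurable_const ℝ Ω _ (ℱ t) _)).stronglyMeasurable
  have hψ'Et_ae : (fun ω => max (Zt ω / Et ω) 0 * Et ω) =ᵐ[P] Zt := by
    filter_upwards [hEtpos, hZtnn] with ω h1 h2
    rw [max_eq_left (div_nonneg h2 h1.le), div_mul_cancel₀ _ h1.ne']
  have int_aux' : Integrable (fun ω => max (Zt ω / Et ω) 0 * Real.exp (α * F ω)) P := by
    constructor
    · exact (((hψSM.measurable.mono hm le_rfl).max measurable_const).mul
        ((hFmeas.const_mul α).exp)).aestronglyMeasurable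
    · rw [hasFiniteIntegral_iff_ofReal (Eventually.of_forall fun ω =>
        mul_nonneg (le_max_right _ _) (Real.exp_nonneg _))]
      rw [tower hm hexpInt ((hFmeas.const_mul α).exp) (fun ω => Real.exp_nonneg _)
        hψ'SM (fun ω => le_max_right _ _)]
      calc ∫⁻ ω, ENNReal.ofReal (max (Zt ω / Et ω) 0
            * (P[(fun ω => Real.exp (α * F ω))|ℱ t]) ω) ∂P
          = ∫⁻ ω, ENNReal.ofReal (Zt ω) ∂P :=
            lintegral_congr_ae (hψ'Et_ae.mono fun ω h => by
              dsimp only; dsimp only at h; rw [← hEt, h])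
        _ ≤ ∫⁻ ω, (‖Zt ω‖₊ : ℝ≥0∞) ∂P := lintegral_mono fun ω => Real.ofReal_le_enorm _
        _ < ∞ := hZtint.2
  have int_aux : Integrable (fun ω => (Zt ω / Et ω) * Real.exp (α * F ω)) P := by
    refine int_aux'.congr ?_
    filter_upwards [hEtpos, hZtnn] with ω h1 h2
    rw [max_eq_left (div_nonneg h2 h1.le)]
  have int_g_PF : Integrable (fun ω => c * Zt ω / Et ω) PF := by
    rw [hPF]
    rw [integrable_withDensity_iff (((hFmeas.const_mul α).exp.div_const c).ennreal_ofReal)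
      (Eventually.of_forall fun ω => ENNReal.ofReal_lt_top)]
    refine int_aux.congr (Eventually.of_forall fun ω => ?_)
    dsimp only
    rw [ENNReal.toReal_ofReal (by positivity)]
    field_simp
  have hBayes : densProc ℱ PF Q t =ᵐ[P] fun ω => c * Zt ω / Et ω := by
    have hG2int : Integrable ((fun ω => Zt ω / Et ω) * (fun ω => Real.exp (α * F ω))) P :=
      int_aux.congr (Eventually.of_forall fun ω => rfl)
    have hmul := condExp_mul_of_stronglyMeasurable_left (m := ℱ t) (μ := P) hψSM hG2int hexpInt
    have key : (fun ω => c * Zt ω / Et ω)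
        =ᵐ[PF] PF[(fun ω => (Q.rnDeriv PF ω).toReal)|ℱ t] := by
      refine ae_eq_condExp_of_forall_setIntegral_eq hm Measure.integrable_toReal_rnDeriv
        (fun s hs hμs => int_g_PF.integrableOn) (fun s hs hμs => ?_)
        ((((@measurable_const ℝ Ω _ (ℱ t) c).mul hZtSM.measurable).div
          hEtSM.measurable).stronglyMeasurable.aestronglyMeasurable)
      rw [Measure.setIntegral_toReal_rnDeriv hQPF s]
      rw [hPF']
      rw [setIntegral_tilted (fun ω => α * F ω) (fun ω => c * Zt ω / Et ω) s]
      have h1 : ∫ x in s, (Real.exp (α * F x) / ∫ x', Real.exp (α * F x') ∂P)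
            • (c * Zt x / Et x) ∂P
          = ∫ x in s, ((fun ω => Zt ω / Et ω) * (fun ω => Real.exp (α * F ω))) x ∂P := by
        refine integral_congr_ae (ae_restrict_of_ae (Eventually.of_forall fun ω => ?_))
        simp only [Pi.mul_apply, smul_eq_mul, ← hc]
        field_simp
      rw [h1, ← setIntegral_condExp hm hG2int hs]
      calc ∫ x in s, (P[(fun ω => Zt ω / Et ω) * (fun ω => Real.exp (α * F ω))|ℱ t]) x ∂P
          = ∫ x in s, (Zt x / Et x) * Et x ∂P := by
            refine integral_congr_ae (ae_restrict_of_ae (hmul.mono fun ω h => ?_))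
            rw [h]; simp only [Pi.mul_apply, ← hEt]
        _ = ∫ x in s, Zt x ∂P := by
            refine integral_congr_ae (ae_restrict_of_ae ?_)
            filter_upwards [hEtpos] with ω h1
            rw [div_mul_cancel₀ _ h1.ne']
        _ = ∫ x in s, ZT x ∂P := setIntegral_condExp hm hZTint hs
        _ = (Q s).toReal := Measure.setIntegral_toReal_rnDeriv hQP s
    exact key.symm.filter_mono hPPF.ae_le
  -- pointwise identity of the integrands, a.e. under Q
  have hintegrand : (fun ω => Real.log (densProc ℱ PF Q T ω / densProc ℱ PF Q t ω)) =ᵐ[Q]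
      ((fun ω => Real.log (ZT ω / Zt ω)) + (-α) • F + fun ω => Real.log (Et ω)) := by
    rw [hdensT']
    filter_upwards [hQP.ae_le hZT'formula, hQP.ae_le hBayes, hZTposQ, hZtposQ,
      hQP.ae_le hEtpos] with ω h1 h2 h3 h4 h5
    rw [h1, h2]
    simp only [Pi.add_apply, Pi.smul_apply, smul_eq_mul]
    have e1 : Real.log (Real.exp (-(α * F ω)) * c * ZT ω)
        = -(α * F ω) + Real.log c + Real.log (ZT ω) := by
      rw [Real.log_mul (mul_ne_zero (Real.exp_ne_zero _) hcpos.ne') h3.ne',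
        Real.log_mul (Real.exp_ne_zero _) hcpos.ne', Real.log_exp]
    have e2 : Real.log (c * Zt ω / Et ω)
        = Real.log c + Real.log (Zt ω) - Real.log (Et ω) := by
      rw [Real.log_div (mul_ne_zero hcpos.ne' h4.ne') h5.ne',
        Real.log_mul hcpos.ne' h4.ne']
    have e3 : Real.log (ZT ω / Zt ω) = Real.log (ZT ω) - Real.log (Zt ω) :=
      Real.log_div h3.ne' h4.ne'
    have hnum : 0 < Real.exp (-(α * F ω)) * c * ZT ω := by positivity
    have hden : 0 < c * Zt ω / Et ω := by positivity
    rw [Real.log_div hnum.ne' hden.ne', e1, e2, e3]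
    ring
  -- assemble via linearity of conditional expectation
  have hGQint : Integrable (fun ω => Real.log (ZT ω / Zt ω)) Q := by
    have h1 : (fun ω => Real.log (ZT ω / Zt ω))
        =ᵐ[Q] fun ω => Real.log (ZT ω) - Real.log (Zt ω) := by
      filter_upwards [hZTposQ, hZtposQ] with ω h1 h2
      exact Real.log_div h1.ne' h2.ne'
    exact (hllr.sub hlogZt_int).congr h1.symm
  have hlogEtSM : StronglyMeasurable[ℱ t] (fun ω => Real.log (Et ω)) :=
    (Real.measurable_log.comp hEtSM.measurable).stronglyMeasurable
  have hcreP : condRelEntropy ℱ P Q T t = Q[(fun ω => Real.log (ZT ω / Zt ω))|ℱ t] := by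
    have h0 : condRelEntropy ℱ P Q T t
        = Q[(fun ω => Real.log (densProc ℱ P Q T ω / densProc ℱ P Q t ω))|ℱ t] := rfl
    rw [h0, hdensT]
    rfl
  have hcrePF : condRelEntropy ℱ PF Q T t
      = Q[(fun ω => Real.log (densProc ℱ PF Q T ω / densProc ℱ PF Q t ω))|ℱ t] := rfl
  have hsmulint : Integrable ((-α) • F) Q := hFintQ.smul (-α)
  have hadd1 := condExp_add (μ := Q) (m := ℱ t) (hGQint.add hsmulint) hlogEt_int
  have hadd2 := condExp_add (μ := Q) (m := ℱ t) hGQint hsmulint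
  have hsm := condExp_smul (μ := Q) (m := ℱ t) (-α) F
  have hce : Q[(fun ω => Real.log (Et ω))|ℱ t] = fun ω => Real.log (Et ω) :=
    condExp_of_stronglyMeasurable hm hlogEtSM hlogEt_int
  have hfinalQ : condRelEntropy ℱ PF Q T t =ᵐ[Q] fun ω =>
      (condRelEntropy ℱ P Q T t ω - α * (Q[F|ℱ t]) ω) + Real.log (Et ω) := by
    rw [hcrePF]
    have hcc := condExp_congr_ae (μ := Q) (m := ℱ t) hintegrand
    filter_upwards [hcc, hadd1, hadd2, hsm] with ω w1 w2 w3 w4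
    rw [w1, w2]
    simp only [Pi.add_apply]
    rw [w3]
    simp only [Pi.add_apply, hce, hcreP, w4, Pi.smul_apply, smul_eq_mul]
    ring
  exact hfinalQ.filter_mono hPQ.ae_le



end DualAux

/-- With `P_F` defined by `dP_F/dP = e^{αF}/𝔼[e^{αF}]`, the dual
value process `I^F_t = essinf_{Q∈M_f}[I_t(Q|P) - α𝔼^Q[F|F_t]]` satisfies
`I^F_t = essinf_{Q∈M_f} I_t(Q|P_F) - log 𝔼[e^{αF}|F_t]`; in particular the dual
minimiser `Q^F` minimises the conditional relative entropy process `I_t(Q|P_F)`. -/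
theorem dual_value_process_change_of_measure
    {Ω : Type*} {mΩ : MeasurableSpace Ω} (P : Measure Ω) [IsProbabilityMeasure P]
    (T : ℝ) (hT : 0 < T)
    (ℱ : Filtration ℝ mΩ) (hF0 : ℱ 0 = ⊥) (hFT : ℱ T = mΩ)
    {d : ℕ} (S : ℝ → Ω → Fin d → ℝ) (hSadapted : Adapted ℱ S)
    (hSpos : ∀ t ω i, 0 < S t ω i)
    (hMf : (Mf ℱ P S).Nonempty)
    (α : ℝ) (hα : 0 < α)
    (F : Ω → ℝ) (hFmeas : Measurable F)
    (hFexp : ∃ ε > 0, Integrable (fun ω => Real.exp ((α + ε) * F ω)) P ∧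
      Integrable (fun ω => Real.exp (-ε * F ω)) P)
    (PF : Measure Ω)
    (hPF : PF = P.withDensity (fun ω =>
      ENNReal.ofReal (Real.exp (α * F ω) / ∫ ω', Real.exp (α * F ω') ∂P)))
    -- `IF t` : the dual value process, the essential infimum of `I_t(Q|P) - α𝔼^Q[F|F_t]`
    (IF : ℝ → Ω → ℝ)
    (hIF : ∀ t ∈ Set.Icc (0:ℝ) T, IsEssInfFam P
      (fun Q : {Q : Measure Ω // Q ∈ Mf ℱ P S} => fun ω =>
        condRelEntropy ℱ P Q.1 T t ω - α * MeasureTheory.condExp (ℱ t) Q.1 F ω)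
      (IF t))
    -- `J t` : the essential infimum of the entropies `I_t(Q|P_F)`
    (J : ℝ → Ω → ℝ)
    (hJ : ∀ t ∈ Set.Icc (0:ℝ) T, IsEssInfFam P
      (fun Q : {Q : Measure Ω // Q ∈ Mf ℱ P S} => condRelEntropy ℱ PF Q.1 T t)
      (J t))
    -- `QF` : the dual minimiser
    (QF : Measure Ω) (hQFmem : QF ∈ Mf ℱ P S)
    (hQFopt : ∀ t ∈ Set.Icc (0:ℝ) T,
      (fun ω => condRelEntropy ℱ P QF T t ω - α * MeasureTheory.condExp (ℱ t) QF F ω)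
        =ᵐ[P] IF t) :
    (∀ t ∈ Set.Icc (0:ℝ) T,
      IF t =ᵐ[P] fun ω => J t ω
        - Real.log (MeasureTheory.condExp (ℱ t) P (fun ω' => Real.exp (α * F ω')) ω)) ∧
    (∀ t ∈ Set.Icc (0:ℝ) T, condRelEntropy ℱ PF QF T t =ᵐ[P] J t) := by
  have key : ∀ t ∈ Set.Icc (0:ℝ) T,
      IF t =ᵐ[P] fun ω => J t ω
        - Real.log (MeasureTheory.condExp (ℱ t) P (fun ω' => Real.exp (α * F ω')) ω) := by
    intro t ht
    have hmain : ∀ QQ : {Q : Measure Ω // Q ∈ Mf ℱ P S},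
        condRelEntropy ℱ PF QQ.1 T t =ᵐ[P] fun ω =>
          (condRelEntropy ℱ P QQ.1 T t ω - α * (MeasureTheory.condExp (ℱ t) QQ.1 F ω))
            + Real.log (MeasureTheory.condExp (ℱ t) P (fun ω' => Real.exp (α * F ω')) ω) := by
      intro QQ
      obtain ⟨hprob, hQP, hPQ, _, hll⟩ := QQ.2
      exact DualAux.main_identity P T ℱ hFT α hα F hFmeas hFexp PF hPF QQ.1 hprob hQP hPQ hll t
    obtain ⟨hIF1, hIF2⟩ := hIF t ht
    obtain ⟨hJ1, hJ2⟩ := hJ t ht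
    have hle1 : (fun ω => IF t ω
        + Real.log (MeasureTheory.condExp (ℱ t) P (fun ω' => Real.exp (α * F ω')) ω))
        ≤ᵐ[P] J t := by
      refine hJ2 _ fun QQ => ?_
      filter_upwards [hIF1 QQ, hmain QQ] with ω h1 h2
      rw [h2]
      linarith
    have hle2 : (fun ω => J t ω
        - Real.log (MeasureTheory.condExp (ℱ t) P (fun ω' => Real.exp (α * F ω')) ω))
        ≤ᵐ[P] IF t := by
      refine hIF2 _ fun QQ => ?_
      filter_upwards [hJ1 QQ, hmain QQ] with ω h1 h2
      rw [h2] at h1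
      linarith
    filter_upwards [hle1, hle2] with ω h1 h2
    linarith
  refine ⟨key, ?_⟩
  intro t ht
  have hmainQF := DualAux.main_identity P T ℱ hFT α hα F hFmeas hFexp PF hPF QF
    hQFmem.1 hQFmem.2.1 hQFmem.2.2.1 hQFmem.2.2.2.2 t
  filter_upwards [hmainQF, hQFopt t ht, key t ht] with ω h1 h2 h3
  rw [h1]
  linarith
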